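/- Let N ≥ 2, let ℏ, z_1, z_2 ∈ ℂ with ℏ ≠ 0, z_1 ≠ z_2, z_1 ≠ 0, z_2 ≠ 0, z_1 + ℏ ≠ 0, z_2 + ℏ ≠ 0, and let q_1,…,q_N ∈ ℂ be pairwise distinct. Then the semi-dynamical rational GL_N R-matrix satisfies the skew-symmetry property R^{sd}(ℏ,z_1,z_2|q) = −P_{12} · R^{sd}(−ℏ, z_2+ℏ, z_1+ℏ | q) · P_{12}. -/

import Mathlib

open Matrix Finset
open scoped Kronecker

noncomputable section

/-- The matrix unit `E_{ij}`. -/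
def Eu (N : ℕ) (i j : Fin N) : Matrix (Fin N) (Fin N) ℂ := Matrix.single i j 1

/-- The permutation operator `P_{12} = Σ_{i,j} E_{ij} ⊗ E_{ji}`. -/
def Pmat (N : ℕ) : Matrix (Fin N × Fin N) (Fin N × Fin N) ℂ :=
  ∑ i, ∑ j, Eu N i j ⊗ₖ Eu N j i

/-- The semi-dynamical rational GL_N R-matrix `R^{sd}(ℏ,z_1,z_2|q)`. -/
def Rsd (N : ℕ) (hb z1 z2 : ℂ) (q : Fin N → ℂ) : Matrix (Fin N × Fin N) (Fin N × Fin N) ℂ :=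
  (∑ i, ∑ j ∈ Finset.univ.erase i, (1/(z1 - z2) + (N : ℂ)/(q j - q i)) • (Eu N i j ⊗ₖ Eu N j i))
  + (∑ i, ∑ j ∈ Finset.univ.erase i, (1/hb + (N : ℂ)/(q j - q i)) • (Eu N i i ⊗ₖ Eu N j j))
  - (∑ i, ∑ j ∈ Finset.univ.erase i, (1/(z1 + hb) + (N : ℂ)/(q j - q i)) • (Eu N i j ⊗ₖ Eu N j j))
  + (∑ i, ∑ j ∈ Finset.univ.erase i, (1/z2 + (N : ℂ)/(q j - q i)) • (Eu N j j ⊗ₖ Eu N i j))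
  + (1/(z1 - z2) + 1/z2 + 1/hb - 1/(z1 + hb)) • ∑ i, Eu N i i ⊗ₖ Eu N i i

lemma key {N : ℕ} (c : Fin N → Fin N → ℂ) (i0 j0 : Fin N) (E : Prop) [Decidable E] :
    (∑ i, ∑ j ∈ Finset.univ.erase i, c i j * if (i = i0 ∧ j = j0) ∧ E then 1 else 0)
      = if i0 ≠ j0 ∧ E then c i0 j0 else 0 := by
  by_cases hE : E
  · by_cases hne : i0 = j0
    · subst hne
      rw [if_neg (by tauto)]
      refine Finset.sum_eq_zero fun i _ => Finset.sum_eq_zero fun j hj => ?_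
      rw [Finset.mem_erase] at hj
      rw [if_neg (by rintro ⟨⟨rfl, rfl⟩, -⟩; exact hj.1 rfl), mul_zero]
    · rw [if_pos ⟨hne, hE⟩]
      rw [Finset.sum_eq_single i0]
      · rw [Finset.sum_eq_single_of_mem j0 (Finset.mem_erase.2 ⟨fun h => hne h.symm, Finset.mem_univ _⟩)]
        · rw [if_pos ⟨⟨rfl, rfl⟩, hE⟩, mul_one]
        · intro j _ hj
          rw [if_neg (by rintro ⟨⟨-, rfl⟩, -⟩; exact hj rfl), mul_zero]
      · intro i _ hi
        refine Finset.sum_eq_zero fun j _ => ?_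
        rw [if_neg (by rintro ⟨⟨rfl, -⟩, -⟩; exact hi rfl), mul_zero]
      · intro h; exact absurd (Finset.mem_univ i0) h
  · rw [if_neg (by tauto)]
    refine Finset.sum_eq_zero fun i _ => Finset.sum_eq_zero fun j _ => ?_
    rw [if_neg (by tauto), mul_zero]

lemma term1_eval {N : ℕ} (c : Fin N → Fin N → ℂ) (a b cc d : Fin N) :
    (∑ i, ∑ j ∈ Finset.univ.erase i,
      c i j * ((if i = a ∧ j = cc then (1:ℂ) else 0) * (if j = b ∧ i = d then 1 else 0)))
      = if a ≠ b ∧ (a = d ∧ b = cc) then c a b else 0 := by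
  rw [← key c a b (a = d ∧ b = cc)]
  refine Finset.sum_congr rfl fun i _ => Finset.sum_congr rfl fun j _ => ?_
  congr 1
  by_cases h1 : i = a <;> by_cases h2 : j = cc <;> by_cases h3 : j = b <;>
    by_cases h4 : i = d <;> by_cases h5 : i = cc <;> by_cases h6 : j = d <;>
    by_cases h7 : j = a <;> by_cases h8 : i = b <;> subst_vars <;> simp_all

lemma term2_eval {N : ℕ} (c : Fin N → Fin N → ℂ) (a b cc d : Fin N) :
    (∑ i, ∑ j ∈ Finset.univ.erase i,
      c i j * ((if i = a ∧ i = cc then (1:ℂ) else 0) * (if j = b ∧ j = d then 1 else 0)))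
      = if a ≠ b ∧ (a = cc ∧ b = d) then c a b else 0 := by
  rw [← key c a b (a = cc ∧ b = d)]
  refine Finset.sum_congr rfl fun i _ => Finset.sum_congr rfl fun j _ => ?_
  congr 1
  by_cases h1 : i = a <;> by_cases h2 : j = cc <;> by_cases h3 : j = b <;>
    by_cases h4 : i = d <;> by_cases h5 : i = cc <;> by_cases h6 : j = d <;>
    by_cases h7 : j = a <;> by_cases h8 : i = b <;> subst_vars <;> simp_all

lemma term3_eval {N : ℕ} (c : Fin N → Fin N → ℂ) (a b cc d : Fin N) :
    (∑ i, ∑ j ∈ Finset.univ.erase i,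
      c i j * ((if i = a ∧ j = cc then (1:ℂ) else 0) * (if j = b ∧ j = d then 1 else 0)))
      = if a ≠ b ∧ (b = cc ∧ b = d) then c a b else 0 := by
  rw [← key c a b (b = cc ∧ b = d)]
  refine Finset.sum_congr rfl fun i _ => Finset.sum_congr rfl fun j _ => ?_
  congr 1
  by_cases h1 : i = a <;> by_cases h2 : j = cc <;> by_cases h3 : j = b <;>
    by_cases h4 : i = d <;> by_cases h5 : i = cc <;> by_cases h6 : j = d <;>
    by_cases h7 : j = a <;> by_cases h8 : i = b <;> subst_vars <;> simp_all

lemma term4_eval {N : ℕ} (c : Fin N → Fin N → ℂ) (a b cc d : Fin N) :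
    (∑ i, ∑ j ∈ Finset.univ.erase i,
      c i j * ((if j = a ∧ j = cc then (1:ℂ) else 0) * (if i = b ∧ j = d then 1 else 0)))
      = if b ≠ a ∧ (a = cc ∧ a = d) then c b a else 0 := by
  rw [← key c b a (a = cc ∧ a = d)]
  refine Finset.sum_congr rfl fun i _ => Finset.sum_congr rfl fun j _ => ?_
  congr 1
  by_cases h1 : i = a <;> by_cases h2 : j = cc <;> by_cases h3 : j = b <;>
    by_cases h4 : i = d <;> by_cases h5 : i = cc <;> by_cases h6 : j = d <;>
    by_cases h7 : j = a <;> by_cases h8 : i = b <;> subst_vars <;> simp_all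

lemma term5_eval {N : ℕ} (a b cc d : Fin N) :
    (∑ i, ((if i = a ∧ i = cc then (1:ℂ) else 0) * (if i = b ∧ i = d then 1 else 0)))
      = if a = b ∧ (a = cc ∧ a = d) then 1 else 0 := by
  have h : ∀ i : Fin N, ((if i = a ∧ i = cc then (1:ℂ) else 0) * (if i = b ∧ i = d then 1 else 0))
      = if i = a ∧ (a = b ∧ (a = cc ∧ a = d)) then 1 else 0 := by
    intro i
    by_cases h1 : i = a <;> by_cases h2 : i = cc <;> by_cases h3 : i = b <;>
      by_cases h4 : i = d <;> subst_vars <;> simp_all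
  rw [Finset.sum_congr rfl fun i _ => h i]
  by_cases hE : a = b ∧ (a = cc ∧ a = d)
  · obtain ⟨rfl, rfl, rfl⟩ := hE
    simp
  · simp [hE]

lemma Rsd_apply (N : ℕ) (hb z1 z2 : ℂ) (q : Fin N → ℂ) (a b c d : Fin N) :
    Rsd N hb z1 z2 q (a,b) (c,d) =
      (if a ≠ b ∧ (a = d ∧ b = c) then 1/(z1-z2) + (N:ℂ)/(q b - q a) else 0)
    + (if a ≠ b ∧ (a = c ∧ b = d) then 1/hb + (N:ℂ)/(q b - q a) else 0)
    - (if a ≠ b ∧ (b = c ∧ b = d) then 1/(z1+hb) + (N:ℂ)/(q b - q a) else 0)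
    + (if b ≠ a ∧ (a = c ∧ a = d) then 1/z2 + (N:ℂ)/(q a - q b) else 0)
    + (if a = b ∧ (a = c ∧ a = d) then (1/(z1 - z2) + 1/z2 + 1/hb - 1/(z1 + hb)) else 0) := by
  simp only [Rsd, Matrix.add_apply, Matrix.sub_apply, Matrix.smul_apply, Matrix.sum_apply,
    Eu, Matrix.kroneckerMap_apply, Matrix.single, Matrix.of_apply, smul_eq_mul]
  rw [term1_eval, term2_eval, term3_eval, term4_eval, term5_eval, mul_ite, mul_one, mul_zero]

lemma Pmat_apply (N : ℕ) (a b c d : Fin N) :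
    Pmat N (a,b) (c,d) = if b = c ∧ d = a then 1 else 0 := by
  simp [Pmat, Eu, Matrix.sum_apply, Matrix.kroneckerMap_apply, Matrix.single,
    Matrix.of_apply, mul_ite, mul_one, mul_zero, ite_and, Finset.sum_ite_eq, Finset.sum_ite_eq']
  split_ifs <;> simp_all

lemma Pmat_conj (N : ℕ) (M : Matrix (Fin N × Fin N) (Fin N × Fin N) ℂ) (a b c d : Fin N) :
    (Pmat N * M * Pmat N) (a,b) (c,d) = M (b,a) (d,c) := by
  have h1 : ∀ (x y : Fin N × Fin N), (Pmat N * M) x y = M (x.2, x.1) y := by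
    rintro ⟨a,b⟩ y
    rw [Matrix.mul_apply, Fintype.sum_prod_type]
    simp [Pmat_apply, ite_and, Finset.sum_ite_eq, Finset.sum_ite_eq']
  rw [Matrix.mul_apply, Fintype.sum_prod_type]
  simp only [h1]
  simp [Pmat_apply, mul_ite, mul_one, mul_zero, ite_and, Finset.sum_ite_eq, Finset.sum_ite_eq']

/-- Skew-symmetry of the semi-dynamical rational GL_N R-matrix:
`R^{sd}(ℏ,z_1,z_2|q) = −P₁₂·R^{sd}(−ℏ,z_2+ℏ,z_1+ℏ|q)·P₁₂`. -/
theorem Rsd_skew_symmetry (N : ℕ) (hN : 2 ≤ N) (hb z1 z2 : ℂ) (hhb : hb ≠ 0)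
    (h12 : z1 ≠ z2) (hz1 : z1 ≠ 0) (hz2 : z2 ≠ 0)
    (hz1p : z1 + hb ≠ 0) (hz2p : z2 + hb ≠ 0)
    (q : Fin N → ℂ) (hq : Function.Injective q) :
    Rsd N hb z1 z2 q = -(Pmat N * Rsd N (-hb) (z2 + hb) (z1 + hb) q * Pmat N) := by
  ext ⟨a, b⟩ ⟨c, d⟩
  rw [Matrix.neg_apply, Pmat_conj, Rsd_apply, Rsd_apply]
  have e1 : (if a ≠ b ∧ (a = d ∧ b = c) then 1/(z1-z2) + (N:ℂ)/(q b - q a) else 0)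
      = -(if b ≠ a ∧ (b = c ∧ a = d) then 1/(z2+hb-(z1+hb)) + (N:ℂ)/(q a - q b) else 0) := by
    have hc : (b ≠ a ∧ (b = c ∧ a = d)) = (a ≠ b ∧ (a = d ∧ b = c)) := by
      apply propext; constructor <;> rintro ⟨x, y, z⟩ <;> exact ⟨fun w => x w.symm, z, y⟩
    simp only [hc]
    split_ifs with h
    · rw [show z2+hb-(z1+hb) = -(z1-z2) from by ring,
        show q a - q b = -(q b - q a) from by ring, div_neg, div_neg]
      ring
    · simp
  have e2 : (if a ≠ b ∧ (a = c ∧ b = d) then 1/hb + (N:ℂ)/(q b - q a) else 0)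
      = -(if b ≠ a ∧ (b = d ∧ a = c) then 1/(-hb) + (N:ℂ)/(q a - q b) else 0) := by
    have hc : (b ≠ a ∧ (b = d ∧ a = c)) = (a ≠ b ∧ (a = c ∧ b = d)) := by
      apply propext; constructor <;> rintro ⟨x, y, z⟩ <;> exact ⟨fun w => x w.symm, z, y⟩
    simp only [hc]
    split_ifs with h
    · rw [show q a - q b = -(q b - q a) from by ring, div_neg, div_neg]
      ring
    · simp
  have e3 : (if b ≠ a ∧ (a = c ∧ a = d) then 1/z2 + (N:ℂ)/(q a - q b) else 0)
      = (if b ≠ a ∧ (a = d ∧ a = c) then 1/(z2+hb+-hb) + (N:ℂ)/(q a - q b) else 0) := by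
    have hc : (b ≠ a ∧ (a = d ∧ a = c)) = (b ≠ a ∧ (a = c ∧ a = d)) := by
      apply propext; constructor <;> rintro ⟨x, y, z⟩ <;> exact ⟨x, z, y⟩
    rw [show z2+hb+-hb = z2 from by ring]
    simp only [hc]
  have e4 : (if a ≠ b ∧ (b = c ∧ b = d) then 1/(z1+hb) + (N:ℂ)/(q b - q a) else 0)
      = (if a ≠ b ∧ (b = d ∧ b = c) then 1/(z1+hb) + (N:ℂ)/(q b - q a) else 0) := by
    have hc : (a ≠ b ∧ (b = d ∧ b = c)) = (a ≠ b ∧ (b = c ∧ b = d)) := by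
      apply propext; constructor <;> rintro ⟨x, y, z⟩ <;> exact ⟨x, z, y⟩
    simp only [hc]
  have e5 : (if a = b ∧ (a = c ∧ a = d) then (1/(z1 - z2) + 1/z2 + 1/hb - 1/(z1 + hb)) else 0)
      = -(if b = a ∧ (b = d ∧ b = c) then
          (1/(z2+hb-(z1+hb)) + 1/(z1+hb) + 1/(-hb) - 1/(z2+hb+-hb)) else 0) := by
    have hc : (b = a ∧ (b = d ∧ b = c)) = (a = b ∧ (a = c ∧ a = d)) := by
      apply propext; constructor <;> rintro ⟨rfl, y, z⟩ <;> exact ⟨rfl, z, y⟩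
    simp only [hc]
    split_ifs with h
    · rw [show z2+hb-(z1+hb) = -(z1-z2) from by ring, show z2+hb+-hb = z2 from by ring,
        div_neg, div_neg]
      ring
    · simp
  rw [e1, e2, e3, e4, e5]
  ring
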